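/- Let ψ : Ŵ → V be an invariant surjection with spinor p. Then for every nonzero isotropic vector v ∈ V there exists a unique 3-dimensional isotropic subspace U ⊆ V such that the image ψ(L_U) equals the line ℂv; moreover, for this U one has v ∈ U. -/

import Mathlib

namespace SSD

noncomputable section

/-- `V` is the 7-dimensional complex vector space `ℂ^7`. -/
abbrev V7 : Type := Fin 7 → ℂ

/-- `Ŵ` is the 8-dimensional spin space, with basis (in this order):
`1, v̂₅, v̂₆, v̂₇, v̂₅v̂₆, v̂₆v̂₇, v̂₅v̂₇, v̂₅v̂₆v̂₇`. -/
abbrev W8 : Type := Fin 8 → ℂ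

/-- The constant `1/√2` as a complex number. -/
def is2 : ℂ := ((Real.sqrt 2 : ℝ) : ℂ)⁻¹

/-- The Clifford action of `v ∈ V` on `x ∈ Ŵ`:  `e₅,e₆,e₇` act by exterior
multiplication by `v̂₅,v̂₆,v̂₇`; `e₁,e₂,e₃` act by `−∂/∂v̂₇, ∂/∂v̂₆, −∂/∂v̂₅`;
`e₄` acts by `(1/√2)·(−1)^deg`. Written out in coordinates. -/
def actFun (v : V7) (x : W8) : W8 := fun k =>
  match k with
  | 0 => -(v 0) * x 3 + v 1 * x 2 - v 2 * x 1 + is2 * v 3 * x 0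
  | 1 => v 0 * x 6 - v 1 * x 4 - is2 * v 3 * x 1 + v 4 * x 0
  | 2 => v 0 * x 5 - v 2 * x 4 - is2 * v 3 * x 2 + v 5 * x 0
  | 3 => v 1 * x 5 - v 2 * x 6 - is2 * v 3 * x 3 + v 6 * x 0
  | 4 => -(v 0) * x 7 + is2 * v 3 * x 4 + v 4 * x 2 - v 5 * x 1
  | 5 => -(v 2) * x 7 + is2 * v 3 * x 5 + v 5 * x 3 - v 6 * x 2
  | 6 => -(v 1) * x 7 + is2 * v 3 * x 6 + v 4 * x 3 - v 6 * x 1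
  | 7 => -(is2 * v 3) * x 7 + v 4 * x 5 - v 5 * x 6 + v 6 * x 4

/-- The action `v · x`, packaged as a bilinear map. -/
def act : V7 →ₗ[ℂ] W8 →ₗ[ℂ] W8 :=
  LinearMap.mk₂ ℂ actFun
    (fun m m' n => by funext k; fin_cases k <;> simp [actFun] <;> ring)
    (fun c m n => by funext k; fin_cases k <;> simp [actFun] <;> ring)
    (fun m n n' => by funext k; fin_cases k <;> simp [actFun] <;> ring)
    (fun c m n => by funext k; fin_cases k <;> simp [actFun] <;> ring)

/-- The bilinear form `B` on `V`: `B(eᵢ,eⱼ) = (−1)^(i+1)` if `i+j=8`, else `0`. -/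
def Bform (u w : V7) : ℂ :=
  u 0 * w 6 + u 6 * w 0 - u 1 * w 5 - u 5 * w 1 + u 2 * w 4 + u 4 * w 2 - u 3 * w 3

/-- The quadratic form `Q(v) = B(v,v)/2` on `V`. -/
def Qform (v : V7) : ℂ := Bform v v / 2

/-- The quadratic form `Q̂` on `Ŵ`:
`Q̂ = α_∅α₅₆₇ + α₆α₅₇ − α₇α₅₆ − α₆₇α₅` in the coordinates of the basis above. -/
def Qhat (x : W8) : ℂ := x 0 * x 7 + x 2 * x 6 - x 3 * x 4 - x 5 * x 1

/-- The bilinear form `B̂(p,q) = Q̂(p+q) − Q̂(p) − Q̂(q)` on `Ŵ`. -/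
def Bhat (p q : W8) : ℂ := Qhat (p + q) - Qhat p - Qhat q

/-- A subspace `U ⊆ V` is isotropic if `B` vanishes identically on it. -/
def IsIsotropic (U : Submodule ℂ V7) : Prop :=
  ∀ u ∈ U, ∀ w ∈ U, Bform u w = 0

/-- `L_U = {x ∈ Ŵ | u·x = 0 for all u ∈ U}`. -/
def LU (U : Submodule ℂ V7) : Submodule ℂ W8 :=
  ⨅ u ∈ U, LinearMap.ker (act u)

/-- `ψ : Ŵ → V` is an invariant surjection with spinor `p` if `p ≠ 0`, `ψ(p)=0`
and `ψ(v·p) = v` for all `v ∈ V`. -/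
def IsInvSurj (ψ : W8 →ₗ[ℂ] V7) (p : W8) : Prop :=
  p ≠ 0 ∧ ψ p = 0 ∧ ∀ v : V7, ψ (act v p) = v

open Module Submodule

lemma is2_sq : is2 * is2 = 2⁻¹ := by
  rw [is2, ← mul_inv]
  rw [← Complex.ofReal_mul, Real.mul_self_sqrt (by norm_num)]
  norm_num

lemma act_apply (u : V7) (x : W8) : act u x = actFun u x := rfl

lemma clifford (u w : V7) (x : W8) :
    act u (act w x) + act w (act u x) = -(Bform u w) • x := by
  funext k
  simp only [act_apply, Pi.add_apply, Pi.smul_apply, smul_eq_mul]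
  fin_cases k
  · simp only [actFun, Bform, show (⟨0, by norm_num⟩ : Fin 8) = (0:Fin 8) from rfl]
    linear_combination (2 * u 3 * w 3 * x 0) * is2_sq
  · simp only [actFun, Bform, show (⟨1, by norm_num⟩ : Fin 8) = (1:Fin 8) from rfl]
    linear_combination (2 * u 3 * w 3 * x 1) * is2_sq
  · simp only [actFun, Bform, show (⟨2, by norm_num⟩ : Fin 8) = (2:Fin 8) from rfl]
    linear_combination (2 * u 3 * w 3 * x 2) * is2_sq
  · simp only [actFun, Bform, show (⟨3, by norm_num⟩ : Fin 8) = (3:Fin 8) from rfl]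
    linear_combination (2 * u 3 * w 3 * x 3) * is2_sq
  · simp only [actFun, Bform, show (⟨4, by norm_num⟩ : Fin 8) = (4:Fin 8) from rfl]
    linear_combination (2 * u 3 * w 3 * x 4) * is2_sq
  · simp only [actFun, Bform, show (⟨5, by norm_num⟩ : Fin 8) = (5:Fin 8) from rfl]
    linear_combination (2 * u 3 * w 3 * x 5) * is2_sq
  · simp only [actFun, Bform, show (⟨6, by norm_num⟩ : Fin 8) = (6:Fin 8) from rfl]
    linear_combination (2 * u 3 * w 3 * x 6) * is2_sq
  · simp only [actFun, Bform, show (⟨7, by norm_num⟩ : Fin 8) = (7:Fin 8) from rfl]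
    linear_combination (2 * u 3 * w 3 * x 7) * is2_sq

lemma bhat_act (u : V7) (x y : W8) : Bhat (act u x) y = - Bhat x (act u y) := by
  simp only [Bhat, Qhat, act_apply, actFun, Pi.add_apply]
  ring

lemma bhat_symm (x y : W8) : Bhat x y = Bhat y x := by
  simp only [Bhat, Qhat, Pi.add_apply]; ring

lemma bhat_self (x : W8) : Bhat x x = 2 * Qhat x := by
  simp only [Bhat, Qhat, Pi.add_apply]; ring

lemma bform_symm (u w : V7) : Bform u w = Bform w u := by
  simp only [Bform]; ring
lemma finrank_V7 : Module.finrank ℂ V7 = 7 := by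
  simp [Module.finrank_pi]

lemma finrank_W8 : Module.finrank ℂ W8 = 8 := by
  simp [Module.finrank_pi]

lemma bform_nondeg (v : V7) (hv : v ≠ 0) : ∃ u, Bform v u ≠ 0 := by
  by_contra hcon
  push_neg at hcon
  apply hv
  funext i
  fin_cases i
  · simpa [Bform, Pi.single_apply] using hcon (Pi.single 6 1)
  · simpa [Bform, Pi.single_apply] using hcon (Pi.single 5 1)
  · simpa [Bform, Pi.single_apply] using hcon (Pi.single 4 1)
  · simpa [Bform, Pi.single_apply] using hcon (Pi.single 3 1)
  · simpa [Bform, Pi.single_apply] using hcon (Pi.single 2 1)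
  · simpa [Bform, Pi.single_apply] using hcon (Pi.single 1 1)
  · simpa [Bform, Pi.single_apply] using hcon (Pi.single 0 1)

lemma bhat_nondeg (x : W8) (hx : x ≠ 0) : ∃ y, Bhat x y ≠ 0 := by
  by_contra hcon
  push_neg at hcon
  apply hx
  funext i
  rw [show (0 : W8) i = 0 from rfl]
  fin_cases i
  · have h := hcon (Pi.single 7 1)
    simp [Bhat, Qhat, Pi.single_apply] at h
    exact (show x 0 = 0 by linear_combination h)
  · have h := hcon (Pi.single 5 1)
    simp [Bhat, Qhat, Pi.single_apply] at h
    exact (show x 1 = 0 by linear_combination -h)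
  · have h := hcon (Pi.single 6 1)
    simp [Bhat, Qhat, Pi.single_apply] at h
    exact (show x 2 = 0 by linear_combination h)
  · have h := hcon (Pi.single 4 1)
    simp [Bhat, Qhat, Pi.single_apply] at h
    exact (show x 3 = 0 by linear_combination -h)
  · have h := hcon (Pi.single 3 1)
    simp [Bhat, Qhat, Pi.single_apply] at h
    exact (show x 4 = 0 by linear_combination -h)
  · have h := hcon (Pi.single 1 1)
    simp [Bhat, Qhat, Pi.single_apply] at h
    exact (show x 5 = 0 by linear_combination -h)
  · have h := hcon (Pi.single 2 1)
    simp [Bhat, Qhat, Pi.single_apply] at h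
    exact (show x 6 = 0 by linear_combination h)
  · have h := hcon (Pi.single 0 1)
    simp [Bhat, Qhat, Pi.single_apply] at h
    exact (show x 7 = 0 by linear_combination h)

lemma rank3 (f : V7 →ₗ[ℂ] V7) (v : V7) (hv : v ≠ 0)
    (h2 : LinearMap.range (f ∘ₗ f) = Submodule.span ℂ {v})
    (hk : LinearMap.ker f ≤ LinearMap.range f) :
    Module.finrank ℂ (LinearMap.ker f) = 3 := by
  have h1 := LinearMap.finrank_range_add_finrank_ker f
  rw [finrank_V7] at h1
  have hg := LinearMap.finrank_range_add_finrank_ker (f.domRestrict (LinearMap.range f))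
  rw [LinearMap.range_domRestrict] at hg
  have hr : Submodule.map f (LinearMap.range f) = Submodule.span ℂ {v} := by
    rw [← h2, LinearMap.range_comp]
  rw [hr, finrank_span_singleton hv] at hg
  have hg3 : Module.finrank ℂ (LinearMap.ker (f.domRestrict (LinearMap.range f)))
      ≤ Module.finrank ℂ (LinearMap.ker f) := by
    rw [← Submodule.finrank_map_subtype_eq (LinearMap.range f), LinearMap.ker_domRestrict,
      Submodule.map_comap_subtype]
    exact Submodule.finrank_mono inf_le_right
  have hk2 : Module.finrank ℂ (LinearMap.ker f) ≤ Module.finrank ℂ (LinearMap.range f) :=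
    Submodule.finrank_mono hk
  omega

lemma bform_add_left (u u' w : V7) : Bform (u + u') w = Bform u w + Bform u' w := by
  simp only [Bform, Pi.add_apply]; ring

lemma bform_smul_left (c : ℂ) (u w : V7) : Bform (c • u) w = c * Bform u w := by
  simp only [Bform, Pi.smul_apply, smul_eq_mul]; ring

lemma bform_add_right (u w w' : V7) : Bform u (w + w') = Bform u w + Bform u w' := by
  simp only [Bform, Pi.add_apply]; ring

lemma bform_smul_right (c : ℂ) (u w : V7) : Bform u (c • w) = c * Bform u w := by
  simp only [Bform, Pi.smul_apply, smul_eq_mul]; ring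

lemma bhat_add_left (x x' y : W8) : Bhat (x + x') y = Bhat x y + Bhat x' y := by
  simp only [Bhat, Qhat, Pi.add_apply]; ring

lemma bhat_smul_left (c : ℂ) (x y : W8) : Bhat (c • x) y = c * Bhat x y := by
  simp only [Bhat, Qhat, Pi.add_apply, Pi.smul_apply, smul_eq_mul]; ring

lemma ker_psi (ψ : W8 →ₗ[ℂ] V7) (p : W8) (hp : p ≠ 0) (hψp : ψ p = 0)
    (hψ : ∀ u, ψ (act u p) = u) : LinearMap.ker ψ = Submodule.span ℂ {p} := by
  have hsurj : Function.Surjective ψ := fun u => ⟨act u p, hψ u⟩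
  have h1 := LinearMap.finrank_range_add_finrank_ker ψ
  rw [LinearMap.range_eq_top.mpr hsurj, finrank_top, finrank_V7, finrank_W8] at h1
  have hle : Submodule.span ℂ {p} ≤ LinearMap.ker ψ := by
    rw [Submodule.span_singleton_le_iff_mem, LinearMap.mem_ker]; exact hψp
  exact (Submodule.eq_of_le_of_finrank_le hle
    (by rw [finrank_span_singleton hp]; omega)).symm

lemma mem_LU (U : Submodule ℂ V7) (x : W8) : x ∈ LU U ↔ ∀ u ∈ U, act u x = 0 := by
  simp [LU, Submodule.mem_iInf, LinearMap.mem_ker]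

def Blin : LinearMap.BilinForm ℂ V7 :=
  LinearMap.mk₂ ℂ Bform
    (fun m m' n => by simp only [Bform, Pi.add_apply]; ring)
    (fun c m n => by simp only [Bform, Pi.smul_apply, smul_eq_mul]; ring)
    (fun m n n' => by simp only [Bform, Pi.add_apply]; ring)
    (fun c m n => by simp only [Bform, Pi.smul_apply, smul_eq_mul]; ring)

lemma blin_apply (u w : V7) : Blin u w = Bform u w := rfl

lemma blin_nondeg : Blin.Nondegenerate := by
  refine ⟨fun u hu => ?_, fun u hu => ?_⟩
  · by_contra h0
    obtain ⟨w, hw⟩ := bform_nondeg u h0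
    exact hw (hu w)
  · by_contra h0
    obtain ⟨w, hw⟩ := bform_nondeg u h0
    exact hw (by rw [bform_symm]; exact hu w)

lemma blin_isSymm : Blin.IsSymm := by
  constructor
  intro x y
  exact bform_symm x y

lemma witt (k : Fin 3 → V7) (hind : LinearIndependent ℂ k)
    (hiso : ∀ i j, Bform (k i) (k j) = 0) :
    ∃ w : Fin 3 → V7, (∀ i j, Bform (k i) (w j) = if i = j then 1 else 0) ∧
      (∀ i j, Bform (w i) (w j) = 0) := by
  classical
  have hs : LinearIndepOn ℂ id (Set.range k) := hind.linearIndepOn_id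
  let b : Basis _ ℂ V7 := Module.Basis.extend hs
  haveI : Finite (hs.extend (Set.subset_univ _)) := Module.Finite.finite_basis b
  let d := Blin.dualBasis blin_nondeg b
  have hmem : ∀ j : Fin 3, k j ∈ hs.extend (Set.subset_univ _) :=
    fun j => hs.subset_extend _ ⟨j, rfl⟩
  let idx : Fin 3 → ↥(hs.extend (Set.subset_univ _)) := fun j => ⟨k j, hmem j⟩
  let y : Fin 3 → V7 := fun j => d (idx j)
  have hinj : Function.Injective idx := by
    intro i j hij
    exact hind.injective (congrArg Subtype.val hij)
  have hky : ∀ i j, Bform (k i) (y j) = if i = j then 1 else 0 := by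
    intro i j
    have h1 : Blin (b (idx i)) (d (idx j)) = if idx i = idx j then 1 else 0 :=
      Blin.apply_dualBasis_right blin_nondeg blin_isSymm b (idx i) (idx j)
    rw [Module.Basis.extend_apply_self] at h1
    rcases eq_or_ne i j with rfl | hne
    · simpa [y, blin_apply] using h1
    · rw [if_neg (fun hc => hne (hinj hc))] at h1
      rw [if_neg hne]
      exact h1
  have hyk : ∀ m n, Bform (y m) (k n) = if n = m then 1 else 0 := by
    intro m n; rw [bform_symm]; exact hky n m
  have hsc : ∀ i : Fin 3, (∑ m : Fin 3, (Bform (y i) (y m) / 2) • k m) =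
      (fun i => ∑ m : Fin 3, (Bform (y i) (y m) / 2) • k m) i := fun i => rfl
  refine ⟨fun j => y j - ∑ m : Fin 3, (Bform (y j) (y m) / 2) • k m, ?_, ?_⟩
  · intro i j
    have h2 : Blin (k i) (∑ m : Fin 3, (Bform (y j) (y m) / 2) • k m) = 0 := by
      rw [map_sum]
      exact Finset.sum_eq_zero fun m _ => by
        rw [map_smul, smul_eq_mul, blin_apply, hiso, mul_zero]
    rw [← blin_apply, map_sub, h2, blin_apply, hky, sub_zero]
  · intro i j
    have hk0 : ∀ m n, Blin (k m) (∑ n' : Fin 3, (Bform (y n) (y n') / 2) • k n') = 0 := by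
      intro m n
      rw [map_sum]
      exact Finset.sum_eq_zero fun n' _ => by
        rw [map_smul, smul_eq_mul, blin_apply, hiso, mul_zero]
    have hys : ∀ i j : Fin 3,
        Blin (y i) (∑ m : Fin 3, (Bform (y j) (y m) / 2) • k m) = Bform (y j) (y i) / 2 := by
      intro i j
      rw [map_sum]
      have hterm : ∀ m : Fin 3, Blin (y i) ((Bform (y j) (y m) / 2) • k m)
          = if m = i then Bform (y j) (y m) / 2 else 0 := by
        intro m
        rw [map_smul, smul_eq_mul, blin_apply, hyk]
        split <;> simp_all
      simp only [hterm]
      simp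
    have hsy : ∀ i j : Fin 3,
        Blin (∑ m : Fin 3, (Bform (y i) (y m) / 2) • k m) (y j) = Bform (y i) (y j) / 2 := by
      intro i j
      rw [map_sum, LinearMap.sum_apply]
      have hterm : ∀ m : Fin 3, ((Bform (y i) (y m) / 2) • Blin (k m)) (y j)
          = if m = j then Bform (y i) (y m) / 2 else 0 := by
        intro m
        rw [LinearMap.smul_apply, smul_eq_mul, blin_apply, hky]
        split <;> simp_all
      simp only [map_smul, hterm]
      simp
    have h0k : ∀ n m : Fin 3, Blin (∑ n' : Fin 3, (Bform (y n) (y n') / 2) • k n') (k m) = 0 := by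
      intro n m
      rw [map_sum, LinearMap.sum_apply]
      exact Finset.sum_eq_zero fun n' _ => by
        rw [map_smul, LinearMap.smul_apply, smul_eq_mul, blin_apply, hiso, mul_zero]
    have hss : Blin (∑ m : Fin 3, (Bform (y i) (y m) / 2) • k m)
        (∑ m : Fin 3, (Bform (y j) (y m) / 2) • k m) = 0 := by
      rw [map_sum]
      exact Finset.sum_eq_zero fun m _ => by
        rw [map_smul, h0k, smul_zero]
    show Bform (y i - ∑ m : Fin 3, (Bform (y i) (y m) / 2) • k m)
        (y j - ∑ m : Fin 3, (Bform (y j) (y m) / 2) • k m) = 0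
    rw [← blin_apply]
    rw [show (Blin (y i - ∑ m : Fin 3, (Bform (y i) (y m) / 2) • k m))
        = Blin (y i) - Blin (∑ m : Fin 3, (Bform (y i) (y m) / 2) • k m) from map_sub _ _ _]
    rw [LinearMap.sub_apply, map_sub, map_sub, hys, hsy, hss, blin_apply]
    linear_combination (1/2 : ℂ) * bform_symm (y i) (y j)
lemma span_of_ann (T S : Fin 3 → W8 →ₗ[ℂ] W8) (x₀ : W8) (hx₀ : x₀ ≠ 0)
    (hTS : ∀ i j z, T i (S j z) = (if i = j then -z else 0) - S j (T i z))
    (hT0 : ∀ i, T i x₀ = 0) (x : W8) (hx : ∀ i, T i x = 0) :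
    ∃ c : ℂ, x = c • x₀ := by
  have tS : ∀ i j, T i (S j x₀) = if i = j then -x₀ else 0 := fun i j => by
    rw [hTS, hT0, map_zero, sub_zero]
  -- single values
  have e00 : T 0 (S 0 x₀) = -x₀ := by rw [tS]; exact if_pos rfl
  have e01 : T 0 (S 1 x₀) = 0 := by rw [tS]; exact if_neg (by decide)
  have e02 : T 0 (S 2 x₀) = 0 := by rw [tS]; exact if_neg (by decide)
  have e10 : T 1 (S 0 x₀) = 0 := by rw [tS]; exact if_neg (by decide)
  have e11 : T 1 (S 1 x₀) = -x₀ := by rw [tS]; exact if_pos rfl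
  have e12 : T 1 (S 2 x₀) = 0 := by rw [tS]; exact if_neg (by decide)
  have e20 : T 2 (S 0 x₀) = 0 := by rw [tS]; exact if_neg (by decide)
  have e21 : T 2 (S 1 x₀) = 0 := by rw [tS]; exact if_neg (by decide)
  have e22 : T 2 (S 2 x₀) = -x₀ := by rw [tS]; exact if_pos rfl
  -- double values
  have f001 : T 0 (S 0 (S 1 x₀)) = -(S 1 x₀) := by
    rw [hTS, e01, map_zero, sub_zero]; exact if_pos rfl
  have f002 : T 0 (S 0 (S 2 x₀)) = -(S 2 x₀) := by
    rw [hTS, e02, map_zero, sub_zero]; exact if_pos rfl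
  have f012 : T 0 (S 1 (S 2 x₀)) = 0 := by
    rw [hTS, e02, map_zero, sub_zero]; exact if_neg (by decide)
  have f101 : T 1 (S 0 (S 1 x₀)) = S 0 x₀ := by
    rw [hTS, e11, if_neg (by decide), map_neg, zero_sub, neg_neg]
  have f102 : T 1 (S 0 (S 2 x₀)) = 0 := by
    rw [hTS, e12, map_zero, sub_zero]; exact if_neg (by decide)
  have f112 : T 1 (S 1 (S 2 x₀)) = -(S 2 x₀) := by
    rw [hTS, e12, map_zero, sub_zero]; exact if_pos rfl
  have f201 : T 2 (S 0 (S 1 x₀)) = 0 := by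
    rw [hTS, e21, map_zero, sub_zero]; exact if_neg (by decide)
  have f202 : T 2 (S 0 (S 2 x₀)) = S 0 x₀ := by
    rw [hTS, e22, if_neg (by decide), map_neg, zero_sub, neg_neg]
  have f212 : T 2 (S 1 (S 2 x₀)) = S 1 x₀ := by
    rw [hTS, e22, if_neg (by decide), map_neg, zero_sub, neg_neg]
  -- triple values
  have g0 : T 0 (S 0 (S 1 (S 2 x₀))) = -(S 1 (S 2 x₀)) := by
    rw [hTS, f012, map_zero, sub_zero]; exact if_pos rfl
  have g1 : T 1 (S 0 (S 1 (S 2 x₀))) = S 0 (S 2 x₀) := by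
    rw [hTS, f112, if_neg (by decide), map_neg, zero_sub, neg_neg]
  have g2 : T 2 (S 0 (S 1 (S 2 x₀))) = -(S 0 (S 1 x₀)) := by
    rw [hTS, f212, if_neg (by decide), zero_sub]
  -- elimination helpers
  have pair : ∀ c d : ℂ, c • x₀ + d • S 2 x₀ = 0 → c = 0 ∧ d = 0 := by
    intro c d hcd
    have h1 := congrArg (T 2) hcd
    rw [map_add, map_smul, map_smul, hT0, e22, smul_zero, map_zero, zero_add, smul_neg] at h1
    have hd : d = 0 := by
      rcases smul_eq_zero.mp (neg_eq_zero.mp h1) with h | h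
      · exact h
      · exact absurd h hx₀
    refine ⟨?_, hd⟩
    rw [hd, zero_smul, add_zero] at hcd
    rcases smul_eq_zero.mp hcd with h | h
    · exact h
    · exact absurd h hx₀
  have quad : ∀ c d e f : ℂ,
      c • x₀ + d • S 1 x₀ + e • S 2 x₀ + f • S 1 (S 2 x₀) = 0 →
      c = 0 ∧ d = 0 ∧ e = 0 ∧ f = 0 := by
    intro c d e f hq
    have h1 := congrArg (T 1) hq
    rw [map_add, map_add, map_add, map_smul, map_smul, map_smul, map_smul,
      hT0, e11, e12, f112, smul_zero, smul_zero, map_zero] at h1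
    have h2 : (-d) • x₀ + (-f) • S 2 x₀ = 0 := by
      linear_combination (norm := module) h1
    obtain ⟨hd, hf⟩ := pair _ _ h2
    rw [neg_eq_zero] at hd hf
    have h3 : c • x₀ + e • S 2 x₀ = 0 := by
      rw [hd, hf, zero_smul, zero_smul, add_zero] at hq
      linear_combination (norm := module) hq
    obtain ⟨hc, he⟩ := pair _ _ h3
    exact ⟨hc, hd, he, hf⟩
  -- the eight vectors
  set y : Fin 8 → W8 := ![x₀, S 0 x₀, S 1 x₀, S 2 x₀, S 0 (S 1 x₀), S 0 (S 2 x₀),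
    S 1 (S 2 x₀), S 0 (S 1 (S 2 x₀))] with hy
  have y0 : y 0 = x₀ := rfl
  have y1 : y 1 = S 0 x₀ := rfl
  have y2 : y 2 = S 1 x₀ := rfl
  have y3 : y 3 = S 2 x₀ := rfl
  have y4 : y 4 = S 0 (S 1 x₀) := rfl
  have y5 : y 5 = S 0 (S 2 x₀) := rfl
  have y6 : y 6 = S 1 (S 2 x₀) := rfl
  have y7 : y 7 = S 0 (S 1 (S 2 x₀)) := rfl
  have hli : LinearIndependent ℂ y := by
    rw [Fintype.linearIndependent_iff]
    intro g hg
    rw [Fin.sum_univ_eight, y0, y1, y2, y3, y4, y5, y6, y7] at hg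
    -- apply T 0
    have h0 := congrArg (T 0) hg
    simp only [map_add, map_smul, map_zero, hT0, e00, e01, e02, f001, f002, f012, g0,
      smul_zero, smul_neg] at h0
    -- h0 : combination of x₀, S1x₀, S2x₀, S1S2x₀
    have h0' : (-(g 1)) • x₀ + (-(g 4)) • S 1 x₀ + (-(g 5)) • S 2 x₀
        + (-(g 7)) • S 1 (S 2 x₀) = 0 := by
      linear_combination (norm := module) h0
    obtain ⟨hg1, hg4, hg5, hg7⟩ := quad _ _ _ _ h0'
    rw [neg_eq_zero] at hg1 hg4 hg5 hg7
    -- apply T 1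
    have h1 := congrArg (T 1) hg
    simp only [map_add, map_smul, map_zero, hT0, e10, e11, e12, f101, f102, f112, g1,
      smul_zero, smul_neg] at h1
    rw [hg4, hg7] at h1
    have h1' : (-(g 2)) • x₀ + (0 : ℂ) • S 1 x₀ + (-(g 6)) • S 2 x₀
        + (0 : ℂ) • S 1 (S 2 x₀) = 0 := by
      linear_combination (norm := module) h1
    obtain ⟨hg2, -, hg6, -⟩ := quad _ _ _ _ h1'
    rw [neg_eq_zero] at hg2 hg6
    -- apply T 2
    have h2 := congrArg (T 2) hg
    simp only [map_add, map_smul, map_zero, hT0, e20, e21, e22, f201, f202, f212, g2,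
      smul_zero, smul_neg] at h2
    rw [hg5, hg6, hg7] at h2
    have h2' : (-(g 3)) • x₀ + (0 : ℂ) • S 1 x₀ + (0 : ℂ) • S 2 x₀
        + (0 : ℂ) • S 1 (S 2 x₀) = 0 := by
      linear_combination (norm := module) h2
    obtain ⟨hg3, -, -, -⟩ := quad _ _ _ _ h2'
    rw [neg_eq_zero] at hg3
    -- remaining: g 0
    rw [hg1, hg2, hg3, hg4, hg5, hg6, hg7] at hg
    simp only [zero_smul, add_zero, zero_add] at hg
    have hg0 : g 0 = 0 := by
      rcases smul_eq_zero.mp hg with h | h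
      · exact h
      · exact absurd h hx₀
    intro i
    fin_cases i
    · exact hg0
    · exact hg1
    · exact hg2
    · exact hg3
    · exact hg4
    · exact hg5
    · exact hg6
    · exact hg7
  -- y is a basis
  have hcard : Fintype.card (Fin 8) = Module.finrank ℂ W8 := by
    rw [finrank_W8, Fintype.card_fin]
  let b := basisOfLinearIndependentOfCardEqFinrank hli hcard
  have hb : ⇑b = y := coe_basisOfLinearIndependentOfCardEqFinrank hli hcard
  -- expand x
  have hrep := b.sum_repr x
  rw [hb] at hrep
  rw [Fin.sum_univ_eight, y0, y1, y2, y3, y4, y5, y6, y7] at hrep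
  have h0 := congrArg (T 0) hrep
  rw [hx 0] at h0
  simp only [map_add, map_smul, map_zero, hT0, e00, e01, e02, f001, f002, f012, g0,
    smul_zero, smul_neg] at h0
  have h0' : (-(b.repr x 1)) • x₀ + (-(b.repr x 4)) • S 1 x₀ + (-(b.repr x 5)) • S 2 x₀
      + (-(b.repr x 7)) • S 1 (S 2 x₀) = 0 := by
    linear_combination (norm := module) h0
  obtain ⟨hc1, hc4, hc5, hc7⟩ := quad _ _ _ _ h0'
  rw [neg_eq_zero] at hc1 hc4 hc5 hc7
  have h1 := congrArg (T 1) hrep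
  rw [hx 1] at h1
  simp only [map_add, map_smul, map_zero, hT0, e10, e11, e12, f101, f102, f112, g1,
    smul_zero, smul_neg] at h1
  rw [hc4, hc7] at h1
  have h1' : (-(b.repr x 2)) • x₀ + (0 : ℂ) • S 1 x₀ + (-(b.repr x 6)) • S 2 x₀
      + (0 : ℂ) • S 1 (S 2 x₀) = 0 := by
    linear_combination (norm := module) h1
  obtain ⟨hc2, -, hc6, -⟩ := quad _ _ _ _ h1'
  rw [neg_eq_zero] at hc2 hc6
  have h2 := congrArg (T 2) hrep
  rw [hx 2] at h2
  simp only [map_add, map_smul, map_zero, hT0, e20, e21, e22, f201, f202, f212, g2,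
    smul_zero, smul_neg] at h2
  rw [hc5, hc6, hc7] at h2
  have h2' : (-(b.repr x 3)) • x₀ + (0 : ℂ) • S 1 x₀ + (0 : ℂ) • S 2 x₀
      + (0 : ℂ) • S 1 (S 2 x₀) = 0 := by
    linear_combination (norm := module) h2
  obtain ⟨hc3, -, -, -⟩ := quad _ _ _ _ h2'
  rw [neg_eq_zero] at hc3
  refine ⟨b.repr x 0, ?_⟩
  rw [hc1, hc2, hc3, hc4, hc5, hc6, hc7] at hrep
  simp only [zero_smul, add_zero, zero_add] at hrep
  exact hrep.symm

/-- for an invariant surjection `ψ` with spinor `p` and a nonzero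
isotropic `v ∈ V`, there is a unique 3-dimensional isotropic `U ⊆ V` with
`ψ(L_U) = ℂv`; moreover `v ∈ U` for this `U`. -/
theorem statement_11 (ψ : W8 →ₗ[ℂ] V7) (p : W8) (h : IsInvSurj ψ p)
    (v : V7) (hv : v ≠ 0) (hq : Qform v = 0) :
    (∃! U : Submodule ℂ V7, Module.finrank ℂ U = 3 ∧ IsIsotropic U ∧
      Submodule.map ψ (LU U) = Submodule.span ℂ {v}) ∧
    (∀ U : Submodule ℂ V7, Module.finrank ℂ U = 3 → IsIsotropic U →
      Submodule.map ψ (LU U) = Submodule.span ℂ {v} → v ∈ U) := by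
  obtain ⟨hp, hψp, hψ⟩ := h
  have hker := ker_psi ψ p hp hψp hψ
  -- decomposition of W8 as ℂp ⊕ V·p
  have hdec : ∀ x : W8, ∃ c : ℂ, x = c • p + act (ψ x) p := by
    intro x
    have hx : x - act (ψ x) p ∈ LinearMap.ker ψ := by
      rw [LinearMap.mem_ker, map_sub, hψ, sub_self]
    rw [hker] at hx
    obtain ⟨c, hc⟩ := Submodule.mem_span_singleton.mp hx
    exact ⟨c, by rw [hc, sub_add_cancel]⟩
  have hsep : ∀ (c : ℂ) (z : V7), c • p + act z p = 0 → c = 0 ∧ z = 0 := by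
    intro c z h0
    have hz : z = 0 := by
      have h1 := congrArg ψ h0
      simpa [map_add, map_smul, hψp, hψ] using h1
    refine ⟨?_, hz⟩
    rw [hz, map_zero, LinearMap.zero_apply, add_zero] at h0
    rcases smul_eq_zero.mp h0 with h | h
    · exact h
    · exact absurd h hp
  have hneq : ∀ (c c' : ℂ) (z z' : V7), c • p + act z p = c' • p + act z' p →
      c = c' ∧ z = z' := by
    intro c c' z z' hE
    have h0 : (c - c') • p + act (z - z') p = 0 := by
      simp only [sub_smul, map_sub, LinearMap.sub_apply]
      linear_combination (norm := module) hE
    obtain ⟨h1, h2⟩ := hsep _ _ h0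
    exact ⟨sub_eq_zero.mp h1, sub_eq_zero.mp h2⟩
  have hzp : ∀ z : V7, Bhat (act z p) p = 0 := by
    intro z
    have h1 := bhat_act z p p
    have h2 := bhat_symm p (act z p)
    linear_combination h1 / 2 - h2 / 2
  have hQp : Qhat p ≠ 0 := by
    intro hQ0
    obtain ⟨yy, hyy⟩ := bhat_nondeg p hp
    apply hyy
    obtain ⟨c, hc⟩ := hdec yy
    rw [bhat_symm]
    conv_lhs => rw [hc]
    rw [bhat_add_left, bhat_smul_left, bhat_self, hzp, hQ0]
    ring
  -- the fundamental product decomposition: β(u,w) = -B(u,w)/2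
  have hββ : ∀ u w : V7,
      act u (act w p) = (-(Bform u w) / 2) • p + act (ψ (act u (act w p))) p := by
    intro u w
    obtain ⟨c1, hc1⟩ := hdec (act u (act w p))
    obtain ⟨c2, hc2⟩ := hdec (act w (act u p))
    have hsum := clifford u w p
    have hE : (c1 + c2) • p + act (ψ (act u (act w p)) + ψ (act w (act u p))) p
        = (-(Bform u w)) • p + act 0 p := by
      simp only [add_smul, map_add, LinearMap.add_apply, map_zero, LinearMap.zero_apply]
      linear_combination (norm := module) hsum - hc1 - hc2
    obtain ⟨hcsum, -⟩ := hneq _ _ _ _ hE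
    have hBc : ∀ (cc : ℂ) (xx : W8), xx = cc • p + act (ψ xx) p →
        Bhat xx p = cc * (2 * Qhat p) := by
      intro cc xx hxx
      conv_lhs => rw [hxx]
      rw [bhat_add_left, bhat_smul_left, bhat_self, hzp]
      ring
    have e1 := hBc c1 _ hc1
    have e2 := hBc c2 _ hc2
    have hsymmB : Bhat (act u (act w p)) p = Bhat (act w (act u p)) p := by
      rw [bhat_act u (act w p) p, bhat_act w (act u p) p, bhat_symm (act w p) (act u p)]
    have hc12 : c1 = c2 :=
      mul_right_cancel₀ (mul_ne_zero two_ne_zero hQp) (e1.symm.trans (hsymmB.trans e2))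
    have hc1v : c1 = -(Bform u w) / 2 := by linear_combination hcsum / 2 + hc12 / 2
    rw [hc1v] at hc1
    exact hc1
  -- the skew product
  have hskew : ∀ u w : V7, ψ (act u (act w p)) = - ψ (act w (act u p)) := by
    intro u w
    have h1 := congrArg ψ (clifford u w p)
    simp only [map_add, map_smul, hψp, smul_zero] at h1
    exact eq_neg_of_add_eq_zero_left h1
  -- the fundamental composition identity (⋆)
  have hstar : ∀ u w z : V7,
      ψ (act u (act (ψ (act w (act z p))) p)) + ψ (act w (act (ψ (act u (act z p))) p))
      = (-(Bform u w)) • z + (Bform w z / 2) • u + (Bform u z / 2) • w := by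
    intro u w z
    have H := clifford u w (act z p)
    rw [hββ w z, hββ u z] at H
    simp only [map_add, map_smul] at H
    rw [hββ u (ψ (act w (act z p))), hββ w (ψ (act u (act z p)))] at H
    have hE : ((-(Bform u (ψ (act w (act z p)))) / 2)
          + (-(Bform w (ψ (act u (act z p)))) / 2)) • p
        + act (ψ (act u (act (ψ (act w (act z p))) p)) + ψ (act w (act (ψ (act u (act z p))) p))
            - (Bform w z / 2) • u - (Bform u z / 2) • w + (Bform u w) • z) p
        = (0 : ℂ) • p + act 0 p := by
      simp only [map_add, map_sub, map_smul, add_smul, LinearMap.add_apply,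
        LinearMap.sub_apply, LinearMap.smul_apply, zero_smul, map_zero, LinearMap.zero_apply]
      linear_combination (norm := module) H
    obtain ⟨-, hvec⟩ := hneq _ _ _ _ hE
    linear_combination (norm := module) hvec
  -- the operator ad_v
  set adv : V7 →ₗ[ℂ] V7 := ψ ∘ₗ (act v) ∘ₗ (LinearMap.flip act p) with hadvdef
  have hadv : ∀ u, adv u = ψ (act v (act u p)) := fun u => rfl
  have hBvv : Bform v v = 0 := by
    have hq' := hq
    rw [Qform] at hq'
    linear_combination 2 * hq'
  have hadv2 : ∀ u, adv (adv u) = (Bform v u / 2) • v := by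
    intro u
    have h := hstar v v u
    rw [hBvv] at h
    rw [hadv, hadv]
    linear_combination (norm := module) ((2:ℂ)⁻¹ : ℂ) • h
  obtain ⟨u', hu'⟩ := bform_nondeg v hv
  have hBu₁ : Bform v ((Bform v u')⁻¹ • u') = 1 := by
    rw [bform_smul_right]
    exact inv_mul_cancel₀ hu'
  set u₁ : V7 := (Bform v u')⁻¹ • u' with hu₁def
  have hKrange : LinearMap.ker adv ≤ LinearMap.range adv := by
    intro w hw
    rw [LinearMap.mem_ker] at hw
    have hBvw : Bform v w = 0 := by
      have h := hadv2 w
      rw [hw, map_zero] at h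
      rcases smul_eq_zero.mp h.symm with h' | h'
      · have := h'
        field_simp at this
        simpa using this
      · exact absurd h' hv
    have h0 : ψ (act v (act w p)) = 0 := by rw [← hadv]; exact hw
    have h := hstar u₁ v w
    rw [h0] at h
    simp only [map_zero, LinearMap.zero_apply, zero_add] at h
    rw [← hadv, bform_symm u₁ v, hBu₁, hBvw] at h
    refine ⟨(Bform u₁ w) • (adv u₁) - ψ (act u₁ (act w p)), ?_⟩
    rw [map_sub, map_smul, hadv2, hBu₁]
    linear_combination (norm := module) -h
  have hrange2 : LinearMap.range (adv ∘ₗ adv) = Submodule.span ℂ {v} := by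
    apply le_antisymm
    · rintro y ⟨u, rfl⟩
      rw [LinearMap.comp_apply, hadv2]
      exact Submodule.smul_mem _ _ (Submodule.mem_span_singleton_self v)
    · rw [Submodule.span_singleton_le_iff_mem]
      refine ⟨(2:ℂ) • u₁, ?_⟩
      rw [LinearMap.comp_apply, map_smul, map_smul, hadv2, hBu₁]
      rw [smul_smul]
      norm_num
  have hKfin : Module.finrank ℂ (LinearMap.ker adv) = 3 := rank3 adv v hv hrange2 hKrange
  -- membership in ker adv is annihilation of x₀ = act v p
  have hmemKiff : ∀ u, u ∈ LinearMap.ker adv ↔ act u (act v p) = 0 := by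
    intro u
    constructor
    · intro hu
      have hu' : ψ (act v (act u p)) = 0 := by rw [← hadv]; exact LinearMap.mem_ker.mp hu
      have hs0 : ψ (act u (act v p)) = 0 := by rw [hskew u v, hu', neg_zero]
      have hB : Bform u v = 0 := by
        have h := hadv2 u
        rw [show adv u = 0 from LinearMap.mem_ker.mp hu, map_zero] at h
        rcases smul_eq_zero.mp h.symm with h' | h'
        · rw [bform_symm]
          have := h'
          field_simp at this
          simpa using this
        · exact absurd h' hv
      rw [hββ u v, hs0, hB]
      simp
    · intro hu
      rw [hββ u v] at hu
      obtain ⟨-, hz⟩ := hsep _ _ hu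
      rw [LinearMap.mem_ker, hadv, hskew v u, hz, neg_zero]
  have hvK : v ∈ LinearMap.ker adv := by
    rw [hmemKiff]
    have h := clifford v v p
    rw [hBvv] at h
    simp only [neg_zero, zero_smul] at h
    have h2 : (2:ℂ) • (act v (act v p)) = 0 := by rw [two_smul]; exact h
    rcases smul_eq_zero.mp h2 with h' | h'
    · exact absurd h' two_ne_zero
    · exact h'
  have hx₀ : act v p ≠ 0 := fun h0 => hv (by rw [← hψ v, h0, map_zero])
  have hKiso : IsIsotropic (LinearMap.ker adv) := by
    intro u hu w hw
    have hu' := (hmemKiff u).mp hu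
    have hw' := (hmemKiff w).mp hw
    have h := clifford u w (act v p)
    rw [hu', hw'] at h
    simp only [map_zero, add_zero] at h
    rcases smul_eq_zero.mp h.symm with h' | h'
    · exact neg_eq_zero.mp h'
    · exact absurd h' hx₀
  -- basis of K and dual vectors
  obtain ⟨kb⟩ : Nonempty (Basis (Fin 3) ℂ (LinearMap.ker adv)) :=
    ⟨Module.finBasisOfFinrankEq ℂ _ hKfin⟩
  set k : Fin 3 → V7 := fun i => ((kb i : LinearMap.ker adv) : V7) with hkdef
  have hkmem : ∀ i, k i ∈ LinearMap.ker adv := fun i => (kb i).2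
  have hkind : LinearIndependent ℂ k :=
    kb.linearIndependent.map' (LinearMap.ker adv).subtype (Submodule.ker_subtype _)
  have hkiso : ∀ i j, Bform (k i) (k j) = 0 := fun i j => hKiso _ (hkmem i) _ (hkmem j)
  obtain ⟨wv, hw1, hw2⟩ := witt k hkind hkiso
  have hTS : ∀ i j z, act (k i) (act (wv j) z)
      = (if i = j then -z else 0) - act (wv j) (act (k i) z) := by
    intro i j z
    have h := clifford (k i) (wv j) z
    rw [hw1] at h
    rcases eq_or_ne i j with rfl | hne
    · rw [if_pos rfl] at h ⊢
      linear_combination (norm := module) h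
    · rw [if_neg hne] at h ⊢
      linear_combination (norm := module) h
  have hT0 : ∀ i, act (k i) (act v p) = 0 := fun i => (hmemKiff _).mp (hkmem i)
  -- the image of L_K
  have hmap : Submodule.map ψ (LU (LinearMap.ker adv)) = Submodule.span ℂ {v} := by
    apply le_antisymm
    · rintro y ⟨x, hxLU, rfl⟩
      obtain ⟨c, hc⟩ := span_of_ann (fun i => act (k i)) (fun i => act (wv i)) (act v p)
        hx₀ hTS hT0 x (fun i => (mem_LU _ _).mp hxLU _ (hkmem i))
      rw [hc, map_smul, hψ]
      exact Submodule.smul_mem _ _ (Submodule.mem_span_singleton_self v)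
    · rw [Submodule.span_singleton_le_iff_mem]
      exact ⟨act v p, (mem_LU _ _).mpr (fun u hu => (hmemKiff u).mp hu), hψ v⟩
  -- uniqueness
  have huniq : ∀ U' : Submodule ℂ V7, Module.finrank ℂ U' = 3 → IsIsotropic U' →
      Submodule.map ψ (LU U') = Submodule.span ℂ {v} → U' = LinearMap.ker adv := by
    intro U' hd hiso hm
    have hvmem : v ∈ Submodule.map ψ (LU U') := by
      rw [hm]
      exact Submodule.mem_span_singleton_self v
    obtain ⟨x', hx'LU, hx'v⟩ := hvmem
    obtain ⟨a, ha⟩ := hdec x'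
    rw [hx'v] at ha
    have hU'ne : ∃ u₀ ∈ U', u₀ ≠ (0 : V7) := by
      by_contra hcon
      push_neg at hcon
      have hbot : U' = ⊥ := (Submodule.eq_bot_iff U').mpr hcon
      rw [hbot, finrank_bot] at hd
      exact absurd hd (by norm_num)
    obtain ⟨u₀, hu₀U, hu₀⟩ := hU'ne
    have hcon : ∀ u ∈ U', Bform u v = 0 ∧ ψ (act u (act v p)) = -(a • u) := by
      intro u hu
      have h0 : act u x' = 0 := (mem_LU _ _).mp hx'LU u hu
      rw [ha, map_add, map_smul, hββ u v] at h0
      have hE : (-(Bform u v) / 2) • p + act (a • u + ψ (act u (act v p))) p = 0 := by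
        simp only [map_add, map_smul, LinearMap.add_apply, LinearMap.smul_apply]
        linear_combination (norm := module) h0
      obtain ⟨h1, h2⟩ := hsep _ _ hE
      constructor
      · field_simp at h1
        simpa using h1
      · linear_combination (norm := module) h2
    have hadvU : ∀ u ∈ U', adv u = a • u := by
      intro u hu
      rw [hadv, hskew v u, (hcon u hu).2, neg_neg]
    have ha0 : a = 0 := by
      have h1 := hadv2 u₀
      rw [hadvU u₀ hu₀U, map_smul, hadvU u₀ hu₀U, bform_symm, (hcon u₀ hu₀U).1] at h1
      rw [smul_smul] at h1
      simp only [zero_div, zero_smul] at h1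
      rcases smul_eq_zero.mp h1 with h | h
      · exact mul_self_eq_zero.mp h
      · exact absurd h hu₀
    have hle : U' ≤ LinearMap.ker adv := by
      intro u hu
      rw [LinearMap.mem_ker, hadvU u hu, ha0, zero_smul]
    exact Submodule.eq_of_le_of_finrank_le hle (by rw [hKfin, hd])
  refine ⟨⟨LinearMap.ker adv, ⟨hKfin, hKiso, hmap⟩,
    fun U' hU' => huniq U' hU'.1 hU'.2.1 hU'.2.2⟩, ?_⟩
  intro U hU1 hU2 hU3
  rw [huniq U hU1 hU2 hU3]
  exact hvK
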